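/- Let α, β be reals with α > −1, β > −1, and α + β ∉ {−1, 0, 1, 2}. Then for every n ≥ 1, in ℝ[X]: (x − 1)·P_{n−1}^{(α+1,β−1)}(x) = P_n^{(α,β−1)}(x) − [2(α+n)(n+α+β−1)/((2n+α+β−1)(2n+α+β−2))]·P_{n−1}^{(α,β−1)}(x). -/

import Mathlib

open Polynomial

/-- `jacobiC a b n` is the recurrence coefficient `c_{n+1}^{(a,b)}` of the monic
Jacobi polynomials. -/
noncomputable def jacobiC (a b : ℝ) (n : ℕ) : ℝ :=
  (b ^ 2 - a ^ 2) / ((2 * (n : ℝ) + a + b) * (2 * (n : ℝ) + a + b + 2))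

/-- `jacobiL a b n` is the recurrence coefficient `λ_{n+1}^{(a,b)}` of the monic
Jacobi polynomials. -/
noncomputable def jacobiL (a b : ℝ) (n : ℕ) : ℝ :=
  4 * (n : ℝ) * ((n : ℝ) + a) * ((n : ℝ) + b) * ((n : ℝ) + a + b) /
    ((2 * (n : ℝ) + a + b) ^ 2 * (2 * (n : ℝ) + a + b + 1) * (2 * (n : ℝ) + a + b - 1))

/-- The monic Jacobi polynomials `P_n^{(a,b)}`, defined by the three-term recurrence
`P_{n+1} = (X - c_{n+1}) P_n - λ_{n+1} P_{n-1}` with `P_{-1} = 0`, `P_0 = 1`. -/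
noncomputable def jacobiP (a b : ℝ) : ℕ → Polynomial ℝ
  | 0 => 1
  | 1 => X - Polynomial.C (jacobiC a b 0)
  | n + 2 => (X - Polynomial.C (jacobiC a b (n + 1))) * jacobiP a b (n + 1)
      - Polynomial.C (jacobiL a b (n + 1)) * jacobiP a b n

/-- The coefficient `χ_n` of the quasi-Geronimus identity. -/
noncomputable def jchi (α β : ℝ) (n : ℕ) : ℝ :=
  2 * (α + (n : ℝ)) * ((n : ℝ) + α + β - 1) /
    ((2 * (n : ℝ) + α + β - 1) * (2 * (n : ℝ) + α + β - 2))

/-- Auxiliary: enlarge a fraction by a nonzero factor. -/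
theorem div_eq_mul_div_aux (a b q M : ℝ) (hq : q ≠ 0) (hM : M = b * q) :
    a / b = a * q / M := by
  subst hM
  rcases eq_or_ne b 0 with h | h
  · simp [h]
  · rw [mul_div_mul_right a b hq]

set_option maxHeartbeats 2000000 in
theorem jacobi_aux
    (α β : ℝ) (hα : -1 < α) (hβ : -1 < β)
    (hab1 : α + β ≠ -1) (hab0 : α + β ≠ 0) (hab2 : α + β ≠ 1) :
    ∀ m : ℕ,
      (X - 1) * jacobiP (α + 1) (β - 1) m =
        jacobiP α (β - 1) (m + 1) - Polynomial.C (jchi α β (m + 1)) * jacobiP α (β - 1) m := by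
  have hs : -2 < α + β := by linarith
  -- base case m = 0
  have base0 : (X - 1) * jacobiP (α + 1) (β - 1) 0 =
      jacobiP α (β - 1) 1 - Polynomial.C (jchi α β 1) * jacobiP α (β - 1) 0 := by
    have hd1 : α + β - 1 ≠ 0 := fun h => hab2 (by linarith)
    have hd2 : α + β + 1 ≠ 0 := fun h => hab1 (by linarith)
    have hd3 : α + β ≠ 0 := hab0
    have h : (1 : ℝ) = jacobiC α (β - 1) 0 + jchi α β 1 := by
      unfold jacobiC jchi
      push_cast
      have e1 : 2 * (0:ℝ) + α + (β - 1) ≠ 0 := fun h => hd1 (by linarith)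
      have e2 : 2 * (0:ℝ) + α + (β - 1) + 2 ≠ 0 := fun h => hd2 (by linarith)
      have e3 : 2 * (1:ℝ) + α + β - 1 ≠ 0 := fun h => hd2 (by linarith)
      have e4 : 2 * (1:ℝ) + α + β - 2 ≠ 0 := fun h => hd3 (by linarith)
      rw [div_add_div _ _ (mul_ne_zero e1 e2) (mul_ne_zero e3 e4),
          eq_div_iff (mul_ne_zero (mul_ne_zero e1 e2) (mul_ne_zero e3 e4))]
      ring
    have h' := congrArg (Polynomial.C : ℝ →+* Polynomial ℝ) h
    simp only [map_add, map_one] at h'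
    simp only [jacobiP]
    linear_combination -h'
  -- base case m = 1
  have base1 : (X - 1) * jacobiP (α + 1) (β - 1) 1 =
      jacobiP α (β - 1) 2 - Polynomial.C (jchi α β 2) * jacobiP α (β - 1) 1 := by
    have hd1 : α + β - 1 ≠ 0 := fun h => hab2 (by linarith)
    have hd2 : α + β + 1 ≠ 0 := fun h => hab1 (by linarith)
    have hd3 : α + β ≠ 0 := hab0
    have hd4 : α + β + 2 ≠ 0 := fun h => (by linarith : ¬ (-2:ℝ) < α + β) hs
    have hd5 : α + β + 3 ≠ 0 := by intro h; linarith
    have hs1 : jacobiC α (β - 1) 1 + jacobiC α (β - 1) 0 + jchi α β 2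
        = 1 + jacobiC (α + 1) (β - 1) 0 := by
      unfold jacobiC jchi
      push_cast
      have e1 : 2 * (0:ℝ) + α + (β - 1) ≠ 0 := fun h => hd1 (by linarith)
      have e2 : 2 * (0:ℝ) + α + (β - 1) + 2 ≠ 0 := fun h => hd2 (by linarith)
      have e3 : 2 * (1:ℝ) + α + (β - 1) ≠ 0 := fun h => hd2 (by linarith)
      have e4 : 2 * (1:ℝ) + α + (β - 1) + 2 ≠ 0 := fun h => hd5 (by linarith)
      have e5 : 2 * (0:ℝ) + (α + 1) + (β - 1) ≠ 0 := fun h => hd3 (by linarith)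
      have e6 : 2 * (0:ℝ) + (α + 1) + (β - 1) + 2 ≠ 0 := fun h => hd4 (by linarith)
      have e7 : 2 * (2:ℝ) + α + β - 1 ≠ 0 := fun h => hd5 (by linarith)
      have e8 : 2 * (2:ℝ) + α + β - 2 ≠ 0 := fun h => hd4 (by linarith)
      rw [div_add_div _ _ (mul_ne_zero e3 e4) (mul_ne_zero e1 e2),
          div_add_div _ _ (mul_ne_zero (mul_ne_zero e3 e4) (mul_ne_zero e1 e2))
            (mul_ne_zero e7 e8),
          add_div' _ _ _ (mul_ne_zero e5 e6),
          div_eq_div_iff (mul_ne_zero (mul_ne_zero (mul_ne_zero e3 e4) (mul_ne_zero e1 e2))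
            (mul_ne_zero e7 e8)) (mul_ne_zero e5 e6)]
      ring
    have hs2 : jacobiC (α + 1) (β - 1) 0 + jacobiL α (β - 1) 1
        = jacobiC α (β - 1) 0 * jacobiC α (β - 1) 1
          + jacobiC α (β - 1) 0 * jchi α β 2 := by
      unfold jacobiC jacobiL jchi
      push_cast
      have e1 : 2 * (0:ℝ) + α + (β - 1) ≠ 0 := fun h => hd1 (by linarith)
      have e2 : 2 * (0:ℝ) + α + (β - 1) + 2 ≠ 0 := fun h => hd2 (by linarith)
      have e3 : 2 * (1:ℝ) + α + (β - 1) ≠ 0 := fun h => hd2 (by linarith)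
      have e4 : 2 * (1:ℝ) + α + (β - 1) + 2 ≠ 0 := fun h => hd5 (by linarith)
      have e5 : 2 * (0:ℝ) + (α + 1) + (β - 1) ≠ 0 := fun h => hd3 (by linarith)
      have e6 : 2 * (0:ℝ) + (α + 1) + (β - 1) + 2 ≠ 0 := fun h => hd4 (by linarith)
      have e7 : 2 * (2:ℝ) + α + β - 1 ≠ 0 := fun h => hd5 (by linarith)
      have e8 : 2 * (2:ℝ) + α + β - 2 ≠ 0 := fun h => hd4 (by linarith)
      have e9 : 2 * (1:ℝ) + α + (β - 1) + 1 ≠ 0 := fun h => hd4 (by linarith)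
      have e10 : 2 * (1:ℝ) + α + (β - 1) - 1 ≠ 0 := fun h => hd3 (by linarith)
      rw [div_mul_div_comm, div_mul_div_comm,
          div_add_div _ _ (mul_ne_zero e5 e6)
            (mul_ne_zero (mul_ne_zero (pow_ne_zero 2 e3) e9) e10),
          div_add_div _ _ (mul_ne_zero (mul_ne_zero e1 e2) (mul_ne_zero e3 e4))
            (mul_ne_zero (mul_ne_zero e1 e2) (mul_ne_zero e7 e8)),
          div_eq_div_iff (mul_ne_zero (mul_ne_zero e5 e6)
              (mul_ne_zero (mul_ne_zero (pow_ne_zero 2 e3) e9) e10))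
            (mul_ne_zero (mul_ne_zero (mul_ne_zero e1 e2) (mul_ne_zero e3 e4))
              (mul_ne_zero (mul_ne_zero e1 e2) (mul_ne_zero e7 e8)))]
      ring
    have h1 := congrArg (Polynomial.C : ℝ →+* Polynomial ℝ) hs1
    have h2 := congrArg (Polynomial.C : ℝ →+* Polynomial ℝ) hs2
    simp only [map_add, map_mul, map_sub, map_one] at h1 h2
    simp only [jacobiP]
    linear_combination X * h1 + h2
  -- inductive step
  have step : ∀ k : ℕ,
      ((X - 1) * jacobiP (α + 1) (β - 1) k =
        jacobiP α (β - 1) (k + 1) - Polynomial.C (jchi α β (k + 1)) * jacobiP α (β - 1) k) →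
      ((X - 1) * jacobiP (α + 1) (β - 1) (k + 1) =
        jacobiP α (β - 1) (k + 2) - Polynomial.C (jchi α β (k + 2)) * jacobiP α (β - 1) (k + 1)) →
      ((X - 1) * jacobiP (α + 1) (β - 1) (k + 2) =
        jacobiP α (β - 1) (k + 3) - Polynomial.C (jchi α β (k + 3)) * jacobiP α (β - 1) (k + 2)) := by
    intro k IH1 IH2
    have hk : (0:ℝ) ≤ (k:ℝ) := Nat.cast_nonneg k
    have d0 : 2 * ((k:ℝ) + 1) + α + β - 2 ≠ 0 := by
      rcases Nat.eq_zero_or_pos k with h | h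
      · subst h; push_cast; intro h'; exact hab0 (by linarith)
      · have h1 : (1:ℝ) ≤ (k:ℝ) := by exact_mod_cast h
        intro h'; linarith
    have d1 : 2 * ((k:ℝ) + 1) + α + β - 1 ≠ 0 := by
      rcases Nat.eq_zero_or_pos k with h | h
      · subst h; push_cast; intro h'; exact hab1 (by linarith)
      · have h1 : (1:ℝ) ≤ (k:ℝ) := by exact_mod_cast h
        intro h'; linarith
    have d2 : 2 * ((k:ℝ) + 1) + α + β ≠ 0 := by intro h'; linarith
    have d3 : 2 * ((k:ℝ) + 1) + α + β + 1 ≠ 0 := by intro h'; linarith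
    have d4 : 2 * ((k:ℝ) + 1) + α + β + 2 ≠ 0 := by intro h'; linarith
    have d5 : 2 * ((k:ℝ) + 1) + α + β + 3 ≠ 0 := by intro h'; linarith
    -- scalar identity (A)
    have hA : jacobiC α (β - 1) (k + 2) + jchi α β (k + 3)
        = jacobiC (α + 1) (β - 1) (k + 1) + jchi α β (k + 2) := by
      unfold jacobiC jchi
      push_cast
      have e1 : 2 * ((k:ℝ) + 2) + α + (β - 1) ≠ 0 := fun h => d3 (by linarith)
      have e2 : 2 * ((k:ℝ) + 2) + α + (β - 1) + 2 ≠ 0 := fun h => d5 (by linarith)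
      have e3 : 2 * ((k:ℝ) + 3) + α + β - 1 ≠ 0 := fun h => d5 (by linarith)
      have e4 : 2 * ((k:ℝ) + 3) + α + β - 2 ≠ 0 := fun h => d4 (by linarith)
      have e5 : 2 * ((k:ℝ) + 1) + (α + 1) + (β - 1) ≠ 0 := fun h => d2 (by linarith)
      have e6 : 2 * ((k:ℝ) + 1) + (α + 1) + (β - 1) + 2 ≠ 0 := fun h => d4 (by linarith)
      have e7 : 2 * ((k:ℝ) + 2) + α + β - 1 ≠ 0 := fun h => d3 (by linarith)
      have e8 : 2 * ((k:ℝ) + 2) + α + β - 2 ≠ 0 := fun h => d2 (by linarith)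
      rw [div_add_div _ _ (mul_ne_zero e1 e2) (mul_ne_zero e3 e4),
          div_add_div _ _ (mul_ne_zero e5 e6) (mul_ne_zero e7 e8),
          div_eq_div_iff (mul_ne_zero (mul_ne_zero e1 e2) (mul_ne_zero e3 e4))
            (mul_ne_zero (mul_ne_zero e5 e6) (mul_ne_zero e7 e8))]
      ring
    -- scalar identity (B)
    have hB : jacobiL α (β - 1) (k + 2) + jchi α β (k + 2) * jacobiC (α + 1) (β - 1) (k + 1)
        = jacobiL (α + 1) (β - 1) (k + 1) + jchi α β (k + 2) * jacobiC α (β - 1) (k + 1) := by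
      unfold jacobiC jacobiL jchi
      push_cast
      have e1 : 2 * ((k:ℝ) + 2) + α + (β - 1) ≠ 0 := fun h => d3 (by linarith)
      have e2 : 2 * ((k:ℝ) + 2) + α + (β - 1) + 1 ≠ 0 := fun h => d4 (by linarith)
      have e3 : 2 * ((k:ℝ) + 2) + α + (β - 1) - 1 ≠ 0 := fun h => d2 (by linarith)
      have e4 : 2 * ((k:ℝ) + 2) + α + β - 1 ≠ 0 := fun h => d3 (by linarith)
      have e5 : 2 * ((k:ℝ) + 2) + α + β - 2 ≠ 0 := fun h => d2 (by linarith)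
      have e6 : 2 * ((k:ℝ) + 1) + (α + 1) + (β - 1) ≠ 0 := fun h => d2 (by linarith)
      have e7 : 2 * ((k:ℝ) + 1) + (α + 1) + (β - 1) + 2 ≠ 0 := fun h => d4 (by linarith)
      have e8 : 2 * ((k:ℝ) + 1) + (α + 1) + (β - 1) + 1 ≠ 0 := fun h => d3 (by linarith)
      have e9 : 2 * ((k:ℝ) + 1) + (α + 1) + (β - 1) - 1 ≠ 0 := fun h => d1 (by linarith)
      have e10 : 2 * ((k:ℝ) + 1) + α + (β - 1) ≠ 0 := fun h => d1 (by linarith)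
      have e11 : 2 * ((k:ℝ) + 1) + α + (β - 1) + 2 ≠ 0 := fun h => d3 (by linarith)
      rw [div_mul_div_comm, div_mul_div_comm,
          div_eq_mul_div_aux (4 * ((k:ℝ) + 2) * ((k:ℝ) + 2 + α) * ((k:ℝ) + 2 + (β - 1)) * ((k:ℝ) + 2 + α + (β - 1))) ((2 * ((k:ℝ) + 2) + α + (β - 1)) ^ 2 * (2 * ((k:ℝ) + 2) + α + (β - 1) + 1) * (2 * ((k:ℝ) + 2) + α + (β - 1) - 1))
            ((2 * ((k:ℝ) + 1) + (α + 1) + (β - 1)) * (2 * ((k:ℝ) + 1) + (α + 1) + (β - 1) - 1)) ((2 * ((k:ℝ) + 2) + α + (β - 1)) ^ 2 * (2 * ((k:ℝ) + 2) + α + (β - 1) + 1) * (2 * ((k:ℝ) + 2) + α + (β - 1) - 1) * ((2 * ((k:ℝ) + 1) + (α + 1) + (β - 1)) * (2 * ((k:ℝ) + 1) + (α + 1) + (β - 1) - 1))) (mul_ne_zero e6 e9) (by ring),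
          div_eq_mul_div_aux ((2 * (α + ((k:ℝ) + 2)) * ((k:ℝ) + 2 + α + β - 1)) * ((β - 1) ^ 2 - (α + 1) ^ 2)) (((2 * ((k:ℝ) + 2) + α + β - 1) * (2 * ((k:ℝ) + 2) + α + β - 2)) * ((2 * ((k:ℝ) + 1) + (α + 1) + (β - 1)) * (2 * ((k:ℝ) + 1) + (α + 1) + (β - 1) + 2)))
            ((2 * ((k:ℝ) + 1) + (α + 1) + (β - 1) + 1) * (2 * ((k:ℝ) + 1) + (α + 1) + (β - 1) - 1)) ((2 * ((k:ℝ) + 2) + α + (β - 1)) ^ 2 * (2 * ((k:ℝ) + 2) + α + (β - 1) + 1) * (2 * ((k:ℝ) + 2) + α + (β - 1) - 1) * ((2 * ((k:ℝ) + 1) + (α + 1) + (β - 1)) * (2 * ((k:ℝ) + 1) + (α + 1) + (β - 1) - 1))) (mul_ne_zero e8 e9) (by ring),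
          div_eq_mul_div_aux (4 * ((k:ℝ) + 1) * ((k:ℝ) + 1 + (α + 1)) * ((k:ℝ) + 1 + (β - 1)) * ((k:ℝ) + 1 + (α + 1) + (β - 1))) ((2 * ((k:ℝ) + 1) + (α + 1) + (β - 1)) ^ 2 * (2 * ((k:ℝ) + 1) + (α + 1) + (β - 1) + 1) * (2 * ((k:ℝ) + 1) + (α + 1) + (β - 1) - 1))
            ((2 * ((k:ℝ) + 1) + (α + 1) + (β - 1) + 1) * (2 * ((k:ℝ) + 1) + (α + 1) + (β - 1) + 2)) ((2 * ((k:ℝ) + 2) + α + (β - 1)) ^ 2 * (2 * ((k:ℝ) + 2) + α + (β - 1) + 1) * (2 * ((k:ℝ) + 2) + α + (β - 1) - 1) * ((2 * ((k:ℝ) + 1) + (α + 1) + (β - 1)) * (2 * ((k:ℝ) + 1) + (α + 1) + (β - 1) - 1))) (mul_ne_zero e8 e7) (by ring),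
          div_eq_mul_div_aux ((2 * (α + ((k:ℝ) + 2)) * ((k:ℝ) + 2 + α + β - 1)) * ((β - 1) ^ 2 - α ^ 2)) (((2 * ((k:ℝ) + 2) + α + β - 1) * (2 * ((k:ℝ) + 2) + α + β - 2)) * ((2 * ((k:ℝ) + 1) + α + (β - 1)) * (2 * ((k:ℝ) + 1) + α + (β - 1) + 2)))
            ((2 * ((k:ℝ) + 1) + (α + 1) + (β - 1)) * (2 * ((k:ℝ) + 1) + (α + 1) + (β - 1) + 2)) ((2 * ((k:ℝ) + 2) + α + (β - 1)) ^ 2 * (2 * ((k:ℝ) + 2) + α + (β - 1) + 1) * (2 * ((k:ℝ) + 2) + α + (β - 1) - 1) * ((2 * ((k:ℝ) + 1) + (α + 1) + (β - 1)) * (2 * ((k:ℝ) + 1) + (α + 1) + (β - 1) - 1))) (mul_ne_zero e6 e7) (by ring),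
          ← add_div, ← add_div]
      congr 1
      ring
    -- scalar identity (C)
    have hC : jacobiL (α + 1) (β - 1) (k + 1) * jchi α β (k + 1)
        = jchi α β (k + 2) * jacobiL α (β - 1) (k + 1) := by
      unfold jacobiL jchi
      push_cast
      have e1 : 2 * ((k:ℝ) + 1) + (α + 1) + (β - 1) ≠ 0 := fun h => d2 (by linarith)
      have e2 : 2 * ((k:ℝ) + 1) + (α + 1) + (β - 1) + 1 ≠ 0 := fun h => d3 (by linarith)
      have e3 : 2 * ((k:ℝ) + 1) + (α + 1) + (β - 1) - 1 ≠ 0 := fun h => d1 (by linarith)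
      have e4 : 2 * ((k:ℝ) + 1) + α + β - 1 ≠ 0 := d1
      have e5 : 2 * ((k:ℝ) + 1) + α + β - 2 ≠ 0 := d0
      have e6 : 2 * ((k:ℝ) + 2) + α + β - 1 ≠ 0 := fun h => d3 (by linarith)
      have e7 : 2 * ((k:ℝ) + 2) + α + β - 2 ≠ 0 := fun h => d2 (by linarith)
      have e8 : 2 * ((k:ℝ) + 1) + α + (β - 1) ≠ 0 := fun h => d1 (by linarith)
      have e9 : 2 * ((k:ℝ) + 1) + α + (β - 1) + 1 ≠ 0 := fun h => d2 (by linarith)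
      have e10 : 2 * ((k:ℝ) + 1) + α + (β - 1) - 1 ≠ 0 := fun h => d0 (by linarith)
      rw [div_mul_div_comm, div_mul_div_comm,
          show (2 * ((k:ℝ) + 2) + α + β - 1) * (2 * ((k:ℝ) + 2) + α + β - 2) *
              ((2 * ((k:ℝ) + 1) + α + (β - 1)) ^ 2 * (2 * ((k:ℝ) + 1) + α + (β - 1) + 1) *
                (2 * ((k:ℝ) + 1) + α + (β - 1) - 1)) = ((2 * ((k:ℝ) + 1) + (α + 1) + (β - 1)) ^ 2 * (2 * ((k:ℝ) + 1) + (α + 1) + (β - 1) + 1) * (2 * ((k:ℝ) + 1) + (α + 1) + (β - 1) - 1) * ((2 * ((k:ℝ) + 1) + α + β - 1) * (2 * ((k:ℝ) + 1) + α + β - 2))) from by ring]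
      congr 1
      ring
    have hA' := congrArg (Polynomial.C : ℝ →+* Polynomial ℝ) hA
    have hB' := congrArg (Polynomial.C : ℝ →+* Polynomial ℝ) hB
    have hC' := congrArg (Polynomial.C : ℝ →+* Polynomial ℝ) hC
    simp only [map_add, map_mul] at hA' hB' hC'
    have e1 : jacobiP (α + 1) (β - 1) (k + 2) =
        (X - Polynomial.C (jacobiC (α + 1) (β - 1) (k + 1))) * jacobiP (α + 1) (β - 1) (k + 1)
          - Polynomial.C (jacobiL (α + 1) (β - 1) (k + 1)) * jacobiP (α + 1) (β - 1) k := rfl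
    have e2 : jacobiP α (β - 1) (k + 3) =
        (X - Polynomial.C (jacobiC α (β - 1) (k + 2))) * jacobiP α (β - 1) (k + 2)
          - Polynomial.C (jacobiL α (β - 1) (k + 2)) * jacobiP α (β - 1) (k + 1) := rfl
    have e3 : jacobiP α (β - 1) (k + 2) =
        (X - Polynomial.C (jacobiC α (β - 1) (k + 1))) * jacobiP α (β - 1) (k + 1)
          - Polynomial.C (jacobiL α (β - 1) (k + 1)) * jacobiP α (β - 1) k := rfl
    rw [e1, e2]
    linear_combination (X - Polynomial.C (jacobiC (α + 1) (β - 1) (k + 1))) * IH2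
      - Polynomial.C (jacobiL (α + 1) (β - 1) (k + 1)) * IH1
      + jacobiP α (β - 1) (k + 2) * hA'
      + Polynomial.C (jchi α β (k + 2)) * e3
      + jacobiP α (β - 1) (k + 1) * hB'
      + jacobiP α (β - 1) k * hC'
  -- two-step induction
  have key : ∀ m : ℕ,
      ((X - 1) * jacobiP (α + 1) (β - 1) m =
        jacobiP α (β - 1) (m + 1) - Polynomial.C (jchi α β (m + 1)) * jacobiP α (β - 1) m) ∧
      ((X - 1) * jacobiP (α + 1) (β - 1) (m + 1) =
        jacobiP α (β - 1) (m + 2) - Polynomial.C (jchi α β (m + 2)) * jacobiP α (β - 1) (m + 1)) := by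
    intro m
    induction m with
    | zero => exact ⟨base0, base1⟩
    | succ k ih => exact ⟨ih.2, step k ih.1 ih.2⟩
  exact fun m => (key m).1

theorem quasiGeronimus_jacobi_compact_sol1
    (α β : ℝ) (hα : -1 < α) (hβ : -1 < β)
    (hab1 : α + β ≠ -1) (hab0 : α + β ≠ 0) (hab2 : α + β ≠ 1) (hab3 : α + β ≠ 2) :
    ∀ n : ℕ, 1 ≤ n →
      (X - 1) * jacobiP (α + 1) (β - 1) (n - 1) =
        jacobiP α (β - 1) n
        - Polynomial.C (2 * (α + (n : ℝ)) * ((n : ℝ) + α + β - 1) /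
            ((2 * (n : ℝ) + α + β - 1) * (2 * (n : ℝ) + α + β - 2)))
          * jacobiP α (β - 1) (n - 1) := by
  intro n hn
  obtain ⟨m, rfl⟩ : ∃ m, n = m + 1 := ⟨n - 1, (Nat.succ_pred_eq_of_pos hn).symm⟩
  simpa [Nat.add_sub_cancel, jchi] using jacobi_aux α β hα hβ hab1 hab0 hab2 m
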